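/- For the 3×3 posterior information matrix J(M) = diag(σ_θ⁻², σ_β⁻², σ_α⁻²) + σ⁻²·[[M, M, S],[M, M, S],[S, S, Q]] with S = MT/2 and Q = T²M(2M−1)/(6(M−1)), the determinant det J(M) grows at least linearly in M; more precisely det J(M) ≥ c·M² for some constant c > 0 depending only on T, σ, σ_θ, σ_β, σ_α, for all sufficiently large M. -/

import Mathlib

set_option maxHeartbeats 1000000


open Matrix

/-- The Gram matrix `CᵀC` of the two-node model in closed form. -/
noncomputable def gramC (T : ℝ) (M : ℕ) : Matrix (Fin 3) (Fin 3) ℝ :=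
  let S : ℝ := M * T / 2
  let Q : ℝ := T ^ 2 * M * (2 * M - 1) / (6 * ((M : ℝ) - 1))
  ![![(M : ℝ), (M : ℝ), S], ![(M : ℝ), (M : ℝ), S], ![S, S, Q]]

/-- The 3×3 information matrix `J(M)` of the two-node model. -/
noncomputable def infoJ (T σ σθ σβ σα : ℝ) (M : ℕ) : Matrix (Fin 3) (Fin 3) ℝ :=
  Matrix.diagonal ![σθ⁻¹ ^ 2, σβ⁻¹ ^ 2, σα⁻¹ ^ 2] + σ⁻¹ ^ 2 • gramC T M

theorem stmt_19 (T σ σθ σβ σα : ℝ) (hT : 0 < T) (hσ : 0 < σ)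
    (hθ : 0 < σθ) (hβ : 0 < σβ) (hα : 0 < σα) :
    ∃ c : ℝ, 0 < c ∧ ∃ M₀ : ℕ, ∀ M : ℕ, M₀ ≤ M →
      c * (M : ℝ) ^ 2 ≤ (infoJ T σ σθ σβ σα M).det := by
  refine ⟨(σ ^ 2)⁻¹ ^ 2 * ((σθ ^ 2)⁻¹ + (σβ ^ 2)⁻¹) * T ^ 2 / 12, by positivity, 2, ?_⟩
  intro M hM
  have hx : (2 : ℝ) ≤ (M : ℝ) := by exact_mod_cast hM
  have hx1 : (0 : ℝ) < (M : ℝ) - 1 := by linarith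
  rw [Matrix.det_fin_three]
  simp only [infoJ, Matrix.add_apply, Matrix.smul_apply]
  simp only [infoJ, gramC, Matrix.add_apply, Matrix.smul_apply, Matrix.diagonal,
    Matrix.cons_val', Matrix.cons_val_zero, Matrix.cons_val_one, Matrix.head_cons,
    Matrix.empty_val', Matrix.cons_val_fin_one, Matrix.of_apply,
    Matrix.cons_val_two, Matrix.tail_cons, smul_eq_mul, inv_pow, Pi.smul_apply]
  norm_num [Fin.ext_iff]
  set a := (σθ ^ 2)⁻¹ with hadef
  set b := (σβ ^ 2)⁻¹ with hbdef
  set d := (σα ^ 2)⁻¹ with hddef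
  set s := (σ ^ 2)⁻¹ with hsdef
  set x := (M : ℝ) with hxdef
  have ha : (0:ℝ) < a := by rw [hadef]; positivity
  have hb : (0:ℝ) < b := by rw [hbdef]; positivity
  have hd : (0:ℝ) < d := by rw [hddef]; positivity
  have hs : (0:ℝ) < s := by rw [hsdef]; positivity
  have key : (a + s * x) * (b + s * x) * (d + s * (T ^ 2 * x * (2 * x - 1) / (6 * (x - 1)))) -
        (a + s * x) * (s * (x * T / 2)) * (s * (x * T / 2)) -
        s * x * (s * x) * (d + s * (T ^ 2 * x * (2 * x - 1) / (6 * (x - 1)))) +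
        s * x * (s * (x * T / 2)) * (s * (x * T / 2)) +
        s * (x * T / 2) * (s * x) * (s * (x * T / 2)) -
        s * (x * T / 2) * (b + s * x) * (s * (x * T / 2)) =
      a * b * d + s * (T ^ 2 * x * (2 * x - 1)) / (6 * (x - 1)) * (a * b)
        + s * x * d * (a + b)
        + s ^ 2 * (a + b) * (T ^ 2 * x ^ 2 * (x + 1)) / (12 * (x - 1)) := by
    field_simp
    ring
  rw [key]
  have h4 : s ^ 2 * (a + b) * T ^ 2 / 12 * x ^ 2 ≤
      s ^ 2 * (a + b) * (T ^ 2 * x ^ 2 * (x + 1)) / (12 * (x - 1)) := by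
    rw [div_mul_eq_mul_div, div_le_div_iff₀ (by norm_num) (by positivity)]
    nlinarith [mul_nonneg (mul_nonneg (mul_nonneg (sq_nonneg s) (add_pos ha hb).le) (sq_nonneg T)) (sq_nonneg x)]
  have h1 : 0 < a * b * d := by positivity
  have hQ : 0 ≤ s * (T ^ 2 * x * (2 * x - 1)) := by
    rw [show s * (T ^ 2 * x * (2 * x - 1)) = s * T ^ 2 * x * (2 * x - 1) from by ring]
    have hx0 : (0:ℝ) ≤ x := by linarith
    exact mul_nonneg (by positivity) (by linarith)
  have h2 : 0 ≤ s * (T ^ 2 * x * (2 * x - 1)) / (6 * (x - 1)) * (a * b) :=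
    mul_nonneg (div_nonneg hQ (by linarith)) (mul_nonneg ha.le hb.le)
  have h3 : 0 ≤ s * x * d * (a + b) := by
    have : (0:ℝ) ≤ x := by linarith
    positivity
  have hss : (((σ ^ 2) ^ 2)⁻¹ : ℝ) = s ^ 2 := by rw [hsdef, inv_pow]
  rw [hss]
  linarith [h4, h1, h2, h3]
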